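/- Let N ≥ 1, let k > −1 be real, let δ ∈ (0, π/2), and take Γ = sin. Let C be the N×N real tridiagonal matrix with all diagonal entries −(1+k), all superdiagonal entries 1, and all subdiagonal entries k, let Ω^δ ∈ ℝ^N be defined by Ω₁ = k sin δ, Ωᵢ = 0 for 2 ≤ i ≤ N−1, Ω_N = sin δ, and let x* ∈ ℝ^N be an equilibrium, i.e. each component of x* equals δ or π−δ. Then there exist a constant c₀ > 0 and an open neighborhood U of x* such that for all x ∈ U: Σ_{i=1}^N (sin xᵢ − sin δ)·(Ω^δ + C·(sin x₁,…,sin x_N)ᵀ)ᵢ ≤ −c₀·‖x − x*‖². -/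

import Mathlib

open Matrix Finset

lemma abs_cos_sub_cos' (x y : ℝ) : |Real.cos x - Real.cos y| ≤ |x - y| := by
  rw [Real.cos_sub_cos, abs_mul, abs_mul]
  have h1 : |Real.sin ((x + y) / 2)| ≤ 1 := Real.abs_sin_le_one _
  have h2 : |Real.sin ((x - y) / 2)| ≤ |(x - y) / 2| := Real.abs_sin_le_abs
  have h3 : |(-2 : ℝ)| = 2 := by norm_num
  have h4 : |(x - y) / 2| = |x - y| / 2 := by rw [abs_div]; norm_num
  calc |(-2 : ℝ)| * |Real.sin ((x + y) / 2)| * |Real.sin ((x - y) / 2)|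
      ≤ 2 * 1 * |(x - y) / 2| := by rw [h3]; gcongr
    _ = |x - y| := by rw [h4]; ring

lemma mvt_sin_aux (a t m : ℝ) (hm : 0 ≤ m) (hlt : a < t)
    (h : ∀ u ∈ Set.Icc a t, m ≤ |Real.cos u|) :
    m * |t - a| ≤ |Real.sin t - Real.sin a| := by
  obtain ⟨c, hc, hslope⟩ := exists_hasDerivAt_eq_slope Real.sin Real.cos hlt
    Real.continuous_sin.continuousOn (fun u _ => Real.hasDerivAt_sin u)
  have hcm : m ≤ |Real.cos c| := h c ⟨hc.1.le, hc.2.le⟩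
  have hne : t - a ≠ 0 := by linarith
  have heq : Real.sin t - Real.sin a = Real.cos c * (t - a) := by
    field_simp at hslope
    linarith [hslope]
  rw [heq, abs_mul]
  gcongr

lemma mvt_sin (a t m : ℝ) (hm : 0 ≤ m)
    (h : ∀ u ∈ Set.uIcc a t, m ≤ |Real.cos u|) :
    m * |t - a| ≤ |Real.sin t - Real.sin a| := by
  rcases lt_trichotomy a t with hlt | heq | hgt
  · exact mvt_sin_aux a t m hm hlt (fun u hu => h u (by
      rw [Set.uIcc_of_le hlt.le]; exact hu))
  · simp [heq]
  · have := mvt_sin_aux t a m hm hgt (fun u hu => h u (by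
      rw [Set.uIcc_of_ge hgt.le]; exact hu))
    rw [abs_sub_comm t a, abs_sub_comm (Real.sin t)]
    exact this

lemma poincare (w : ℕ → ℝ) (N : ℕ) (hN : 1 ≤ N) :
    ∑ j ∈ range N, (w j) ^ 2 ≤
      2 * (N : ℝ) ^ 2 * ((w 0) ^ 2 + ∑ i ∈ range (N - 1), (w (i + 1) - w i) ^ 2) := by
  set D := ∑ i ∈ range (N - 1), (w (i + 1) - w i) ^ 2 with hD
  have hDnn : 0 ≤ D := Finset.sum_nonneg fun i _ => sq_nonneg _
  have key : ∀ j ∈ range N, (w j) ^ 2 ≤ 2 * (w 0) ^ 2 + 2 * (N : ℝ) * D := by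
    intro j hj
    rw [mem_range] at hj
    have htel : w j = w 0 + ∑ i ∈ range j, (w (i + 1) - w i) := by
      rw [Finset.sum_range_sub]; ring
    have hsub : range j ⊆ range (N - 1) := by
      apply range_subset_range.mpr; omega
    have hcs : (∑ i ∈ range j, (w (i + 1) - w i)) ^ 2 ≤
        (j : ℝ) * ∑ i ∈ range j, (w (i + 1) - w i) ^ 2 := by
      have := sq_sum_le_card_mul_sum_sq (s := range j) (f := fun i => w (i + 1) - w i)
      simpa using this
    have hmono : ∑ i ∈ range j, (w (i + 1) - w i) ^ 2 ≤ D :=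
      Finset.sum_le_sum_of_subset_of_nonneg hsub (fun _ _ _ => sq_nonneg _)
    have hjN : (j : ℝ) ≤ (N : ℝ) := by exact_mod_cast hj.le
    have h1 : (∑ i ∈ range j, (w (i + 1) - w i)) ^ 2 ≤ (N : ℝ) * D := by
      calc (∑ i ∈ range j, (w (i + 1) - w i)) ^ 2
          ≤ (j : ℝ) * ∑ i ∈ range j, (w (i + 1) - w i) ^ 2 := hcs
        _ ≤ (N : ℝ) * D := by
            apply mul_le_mul hjN hmono (Finset.sum_nonneg fun i _ => sq_nonneg _)
              (by positivity)
    rw [htel]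
    nlinarith [sq_nonneg (w 0 - ∑ i ∈ range j, (w (i + 1) - w i)), h1]
  calc ∑ j ∈ range N, (w j) ^ 2
      ≤ ∑ _j ∈ range N, (2 * (w 0) ^ 2 + 2 * (N : ℝ) * D) := Finset.sum_le_sum key
    _ = (N : ℝ) * (2 * (w 0) ^ 2 + 2 * (N : ℝ) * D) := by
        rw [Finset.sum_const, card_range, nsmul_eq_mul]
    _ ≤ 2 * (N : ℝ) ^ 2 * ((w 0) ^ 2 + D) := by
        have h1 : (1 : ℝ) ≤ (N : ℝ) := by exact_mod_cast hN
        have h2 : (N : ℝ) ≤ (N : ℝ) ^ 2 := by nlinarith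
        nlinarith [mul_nonneg (by linarith : (0:ℝ) ≤ (N : ℝ) ^ 2 - (N : ℝ)) (sq_nonneg (w 0)),
          mul_nonneg (by linarith : (0:ℝ) ≤ (N : ℝ) ^ 2 - (N : ℝ)) hDnn]

lemma qf_identity (w : ℕ → ℝ) (m : ℕ) :
    2 * ((∑ j ∈ range (m + 1), (w j) ^ 2) - ∑ i ∈ range m, w i * w (i + 1))
      = (w 0) ^ 2 + (w m) ^ 2 + ∑ i ∈ range m, (w (i + 1) - w i) ^ 2 := by
  have h1 : ∑ i ∈ range m, (w (i + 1) - w i) ^ 2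
      = (∑ i ∈ range m, (w (i + 1)) ^ 2) + (∑ i ∈ range m, (w i) ^ 2)
        - 2 * ∑ i ∈ range m, w i * w (i + 1) := by
    rw [Finset.mul_sum, ← Finset.sum_add_distrib, ← Finset.sum_sub_distrib]
    apply Finset.sum_congr rfl; intros; ring
  have h2 : ∑ i ∈ range m, (w (i + 1)) ^ 2 = (∑ j ∈ range (m + 1), (w j) ^ 2) - (w 0) ^ 2 := by
    rw [Finset.sum_range_succ' (fun j => (w j) ^ 2)]; ring
  have h3 : ∑ i ∈ range m, (w i) ^ 2 = (∑ j ∈ range (m + 1), (w j) ^ 2) - (w m) ^ 2 := by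
    rw [Finset.sum_range_succ (fun j => (w j) ^ 2)]; ring
  rw [h1, h2, h3]; ring

lemma qf_bound (w : ℕ → ℝ) (N : ℕ) (hN : 1 ≤ N) (hwN : w N = 0) (k : ℝ) (hk : -1 < k) :
    -(1 + k) * (∑ j ∈ range N, (w j) ^ 2) + (1 + k) * (∑ i ∈ range (N - 1), w i * w (i + 1))
      ≤ -((1 + k) / (4 * (N : ℝ) ^ 2)) * ∑ j ∈ range N, (w j) ^ 2 := by
  obtain ⟨m, rfl⟩ : ∃ m, N = m + 1 := ⟨N - 1, by omega⟩
  set S := ∑ j ∈ range (m + 1), (w j) ^ 2 with hS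
  set P := ∑ i ∈ range (m + 1 - 1), w i * w (i + 1) with hP
  set D := ∑ i ∈ range (m + 1 - 1), (w (i + 1) - w i) ^ 2 with hD
  have hm1 : m + 1 - 1 = m := by omega
  have hid : 2 * (S - P) = (w 0) ^ 2 + (w m) ^ 2 + D := by
    rw [hS, hP, hD, hm1]; exact qf_identity w m
  have hpo : S ≤ 2 * ((m : ℝ) + 1) ^ 2 * ((w 0) ^ 2 + D) := by
    have := poincare w (m + 1) (by omega)
    rwa [Nat.cast_add, Nat.cast_one] at this
  have hNc : (0 : ℝ) < ((m : ℝ) + 1) ^ 2 := by positivity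
  have h1k : (0 : ℝ) < 1 + k := by linarith
  have key : S ≤ 4 * ((m : ℝ) + 1) ^ 2 * (S - P) := by
    nlinarith [mul_nonneg (le_of_lt (by positivity : (0:ℝ) < 2 * ((m:ℝ)+1)^2)) (sq_nonneg (w m))]
  have hc : (1 + k) / (4 * ((m : ℝ) + 1) ^ 2) * (4 * ((m : ℝ) + 1) ^ 2 * (S - P))
      = (1 + k) * (S - P) := by field_simp
  have hmul : (1 + k) / (4 * ((m : ℝ) + 1) ^ 2) * S
      ≤ (1 + k) / (4 * ((m : ℝ) + 1) ^ 2) * (4 * ((m : ℝ) + 1) ^ 2 * (S - P)) := by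
    apply mul_le_mul_of_nonneg_left key (by positivity)
  rw [hc] at hmul
  have hcast : ((m + 1 : ℕ) : ℝ) = (m : ℝ) + 1 := by push_cast; ring
  rw [hcast]
  linarith


theorem local_energy_decay_bound (N : ℕ) (hN : 1 ≤ N) (k δ : ℝ) (hk : -1 < k)
    (hδ : δ ∈ Set.Ioo 0 (Real.pi / 2))
    (C : Matrix (Fin N) (Fin N) ℝ)
    (hC : ∀ i j : Fin N, C i j =
      if (i : ℕ) = (j : ℕ) then -(1 + k)
      else if (j : ℕ) = (i : ℕ) + 1 then 1
      else if (i : ℕ) = (j : ℕ) + 1 then k else 0)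
    (Ω : Fin N → ℝ)
    (hΩ : ∀ i : Fin N, Ω i =
      (if (i : ℕ) = 0 then k * Real.sin δ else 0) +
        (if (i : ℕ) = N - 1 then Real.sin δ else 0))
    (xs : Fin N → ℝ) (hxs : ∀ i, xs i = δ ∨ xs i = Real.pi - δ) :
    ∃ c₀ > (0 : ℝ), ∃ U ∈ nhds xs, ∀ x ∈ U,
      ∑ i : Fin N, (Real.sin (x i) - Real.sin δ) *
          (Ω i + (C *ᵥ fun j => Real.sin (x j)) i) ≤ -c₀ * ‖x - xs‖ ^ 2 := by
  obtain ⟨hδ0, hδπ⟩ := hδ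
  have hπ : (0 : ℝ) < Real.pi := Real.pi_pos
  have hcos : 0 < Real.cos δ := Real.cos_pos_of_mem_Ioo ⟨by linarith, hδπ⟩
  have h1k : (0 : ℝ) < 1 + k := by linarith
  have hNR : (1 : ℝ) ≤ (N : ℝ) := by exact_mod_cast hN
  set ε : ℝ := Real.cos δ / 2 with hε
  have hεpos : 0 < ε := by positivity
  set c₁ : ℝ := (1 + k) / (4 * (N : ℝ) ^ 2) with hc₁
  have hc₁pos : 0 < c₁ := by positivity
  refine ⟨c₁ * ε ^ 2, by positivity, Metric.ball xs ε, Metric.ball_mem_nhds xs hεpos, ?_⟩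
  intro x hx
  -- notation
  set v : Fin N → ℝ := fun j => Real.sin (x j) - Real.sin δ with hv
  set w : ℕ → ℝ := fun n => if h : n < N then v ⟨n, h⟩ else 0 with hwdef
  have hw : ∀ i : Fin N, w (i : ℕ) = v i := fun i => dif_pos i.isLt
  have hwN : ∀ n, N ≤ n → w n = 0 := fun n hn => dif_neg (by omega)
  -- row evaluation of C
  have hrow : ∀ (u : Fin N → ℝ) (i : Fin N),
      (C *ᵥ u) i = -(1 + k) * u i
        + (if h : (i : ℕ) + 1 < N then u ⟨(i : ℕ) + 1, h⟩ else 0)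
        + (if h : 0 < (i : ℕ) then
            k * u ⟨(i : ℕ) - 1, lt_of_le_of_lt (Nat.sub_le _ _) i.isLt⟩ else 0) := by
    intro u i
    have hmv : (C *ᵥ u) i = ∑ j : Fin N, C i j * u j := rfl
    have hterm : ∀ j : Fin N, C i j * u j =
        (if i = j then -(1 + k) * u j else 0)
        + (if (j : ℕ) = (i : ℕ) + 1 then u j else 0)
        + (if (i : ℕ) = (j : ℕ) + 1 then k * u j else 0) := by
      intro j
      rw [hC i j]
      have hij : (i = j) ↔ ((i : ℕ) = (j : ℕ)) := Fin.ext_iff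
      by_cases h1 : (i : ℕ) = (j : ℕ)
      · rw [if_pos h1, if_pos (hij.mpr h1), if_neg (by omega), if_neg (by omega)]; ring
      · rw [if_neg h1, if_neg (fun h => h1 (hij.mp h))]
        by_cases h2 : (j : ℕ) = (i : ℕ) + 1
        · rw [if_pos h2, if_pos h2, if_neg (by omega)]; ring
        · rw [if_neg h2, if_neg h2]
          by_cases h3 : (i : ℕ) = (j : ℕ) + 1
          · rw [if_pos h3, if_pos h3]; ring
          · rw [if_neg h3, if_neg h3]; ring
    rw [hmv]
    simp_rw [hterm]
    rw [Finset.sum_add_distrib, Finset.sum_add_distrib]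
    have hS1 : ∑ j : Fin N, (if i = j then -(1 + k) * u j else 0) = -(1 + k) * u i := by
      simp
    have hS2 : ∑ j : Fin N, (if (j : ℕ) = (i : ℕ) + 1 then u j else 0)
        = (if h : (i : ℕ) + 1 < N then u ⟨(i : ℕ) + 1, h⟩ else 0) := by
      by_cases h2 : (i : ℕ) + 1 < N
      · rw [dif_pos h2]
        have : ∀ j : Fin N, ((j : ℕ) = (i : ℕ) + 1) ↔ ((⟨(i : ℕ) + 1, h2⟩ : Fin N) = j) := by
          intro j; rw [Fin.ext_iff]; constructor <;> (intro h; simp_all)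
        simp_rw [this]
        simp
      · rw [dif_neg h2]
        apply Finset.sum_eq_zero
        intro j _
        exact if_neg (by have := j.isLt; omega)
    have hS3 : ∑ j : Fin N, (if (i : ℕ) = (j : ℕ) + 1 then k * u j else 0)
        = (if h : 0 < (i : ℕ) then
            k * u ⟨(i : ℕ) - 1, lt_of_le_of_lt (Nat.sub_le _ _) i.isLt⟩ else 0) := by
      by_cases h3 : 0 < (i : ℕ)
      · rw [dif_pos h3]
        have : ∀ j : Fin N, ((i : ℕ) = (j : ℕ) + 1) ↔
            ((⟨(i : ℕ) - 1, lt_of_le_of_lt (Nat.sub_le _ _) i.isLt⟩ : Fin N) = j) := by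
          intro j; rw [Fin.ext_iff]; simp only []; constructor <;> (intro h; omega)
        simp_rw [this]
        simp
      · rw [dif_neg h3]
        apply Finset.sum_eq_zero
        intro j _
        exact if_neg (by omega)
    rw [hS1, hS2, hS3]
  -- the equilibrium cancels Ω
  have hconst : ∀ i : Fin N, Ω i + (C *ᵥ fun _ => Real.sin δ) i = 0 := by
    intro i
    rw [hrow (fun _ => Real.sin δ) i, hΩ i]
    have hi : (i : ℕ) < N := i.isLt
    by_cases h2 : (i : ℕ) + 1 < N <;> by_cases h3 : 0 < (i : ℕ)
    · rw [dif_pos h2, dif_pos h3, if_neg (by omega : ¬(i : ℕ) = 0),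
        if_neg (by omega : ¬(i : ℕ) = N - 1)]; ring
    · rw [dif_pos h2, dif_neg h3, if_pos (by omega : (i : ℕ) = 0),
        if_neg (by omega : ¬(i : ℕ) = N - 1)]; ring
    · rw [dif_neg h2, dif_pos h3, if_neg (by omega : ¬(i : ℕ) = 0),
        if_pos (by omega : (i : ℕ) = N - 1)]; ring
    · rw [dif_neg h2, dif_neg h3, if_pos (by omega : (i : ℕ) = 0),
        if_pos (by omega : (i : ℕ) = N - 1)]; ring
  have hstep1 : ∀ i : Fin N, Ω i + (C *ᵥ fun j => Real.sin (x j)) i = (C *ᵥ v) i := by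
    intro i
    have hfun : (fun j => Real.sin (x j)) = (fun j => v j + Real.sin δ) := by
      funext j; simp [hv]
    have hsum : (C *ᵥ fun j => Real.sin (x j)) = C *ᵥ v + C *ᵥ (fun _ => Real.sin δ) := by
      rw [hfun]
      have h0 : (fun j => v j + Real.sin δ) = v + (fun _ => Real.sin δ) := rfl
      rw [h0, Matrix.mulVec_add]
    rw [hsum]
    have := hconst i
    simp only [Pi.add_apply]
    linarith
  -- rewrite (C *ᵥ v) in terms of w
  have hrowv : ∀ i : Fin N, (C *ᵥ v) i =
      -(1 + k) * w (i : ℕ) + w ((i : ℕ) + 1)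
        + (if 0 < (i : ℕ) then k * w ((i : ℕ) - 1) else 0) := by
    intro i
    have hwv : ∀ (n : ℕ) (h : n < N), w n = v ⟨n, h⟩ := fun n h => dif_pos h
    have hd1 : (if h : (i : ℕ) + 1 < N then v ⟨(i : ℕ) + 1, h⟩ else 0) = w ((i : ℕ) + 1) := by
      by_cases h2 : (i : ℕ) + 1 < N
      · rw [dif_pos h2]; exact (hwv _ h2).symm
      · rw [dif_neg h2]; exact (hwN _ (by omega)).symm
    have hd2 : (if h : 0 < (i : ℕ) then
          k * v ⟨(i : ℕ) - 1, lt_of_le_of_lt (Nat.sub_le _ _) i.isLt⟩ else 0)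
        = (if 0 < (i : ℕ) then k * w ((i : ℕ) - 1) else 0) := by
      by_cases h3 : 0 < (i : ℕ)
      · rw [dif_pos h3, if_pos h3, hwv ((i : ℕ) - 1) (lt_of_le_of_lt (Nat.sub_le _ _) i.isLt)]
      · rw [dif_neg h3, if_neg h3]
    rw [hrow v i, ← hw i, hd1, hd2]
  -- the main sum as a quadratic form in w
  set S : ℝ := ∑ n ∈ range N, (w n) ^ 2 with hS
  set P : ℝ := ∑ n ∈ range (N - 1), w n * w (n + 1) with hP
  have hsum_eq : ∑ i : Fin N, (Real.sin (x i) - Real.sin δ) *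
      (Ω i + (C *ᵥ fun j => Real.sin (x j)) i) = -(1 + k) * S + (1 + k) * P := by
    have e1 : ∀ i : Fin N, (Real.sin (x i) - Real.sin δ) *
        (Ω i + (C *ᵥ fun j => Real.sin (x j)) i)
        = w (i : ℕ) * (-(1 + k) * w (i : ℕ) + w ((i : ℕ) + 1)
            + (if 0 < (i : ℕ) then k * w ((i : ℕ) - 1) else 0)) := by
      intro i
      rw [hstep1 i, hrowv i]
      have : Real.sin (x i) - Real.sin δ = w (i : ℕ) := (hw i).symm
      rw [this]
    rw [Finset.sum_congr rfl (fun i _ => e1 i)]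
    rw [Fin.sum_univ_eq_sum_range (fun n => w n * (-(1 + k) * w n + w (n + 1)
      + (if 0 < n then k * w (n - 1) else 0))) N]
    have e2 : ∀ n, w n * (-(1 + k) * w n + w (n + 1) + (if 0 < n then k * w (n - 1) else 0))
        = -(1 + k) * (w n) ^ 2 + w n * w (n + 1)
          + (if 0 < n then k * (w n * w (n - 1)) else 0) := by
      intro n; split_ifs <;> ring
    rw [Finset.sum_congr rfl (fun n _ => e2 n), Finset.sum_add_distrib,
      Finset.sum_add_distrib]
    obtain ⟨m, hm⟩ : ∃ m, N = m + 1 := ⟨N - 1, by omega⟩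
    have hA : ∑ n ∈ range N, -(1 + k) * (w n) ^ 2 = -(1 + k) * S := by
      rw [hS, Finset.mul_sum]
    have hB : ∑ n ∈ range N, w n * w (n + 1) = P := by
      rw [hP, hm, Finset.sum_range_succ, hwN (m + 1) (by omega)]
      simp
    have hCs : ∑ n ∈ range N, (if 0 < n then k * (w n * w (n - 1)) else 0) = k * P := by
      rw [hm, Finset.sum_range_succ' (fun n => if 0 < n then k * (w n * w (n - 1)) else 0) m]
      have h0 : (if 0 < (0 : ℕ) then k * (w 0 * w (0 - 1)) else 0) = 0 := if_neg (by omega)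
      rw [h0, add_zero]
      have hterm : ∀ n ∈ range m,
          (if 0 < n + 1 then k * (w (n + 1) * w (n + 1 - 1)) else 0) = k * (w n * w (n + 1)) := by
        intro n _
        rw [if_pos (Nat.succ_pos n)]
        simp only [Nat.add_sub_cancel]
        ring
      rw [Finset.sum_congr rfl hterm, ← Finset.mul_sum, hP, hm]
      simp only [Nat.add_sub_cancel]
    rw [hA, hB, hCs]
    ring
  -- quadratic form bound
  have hqf : -(1 + k) * S + (1 + k) * P ≤ -c₁ * S := by
    have := qf_bound w N hN (hwN N le_rfl) k hk
    rw [hc₁]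
    convert this using 2
  -- lower bound on S via MVT
  have hSx : ∀ i : Fin N, ε ^ 2 * (x i - xs i) ^ 2 ≤ (v i) ^ 2 := by
    intro i
    have hdist : |x i - xs i| < ε := by
      have h1 : dist (x i) (xs i) ≤ dist x xs := dist_le_pi_dist x xs i
      have h2 : dist x xs < ε := Metric.mem_ball.mp hx
      rw [Real.dist_eq] at h1
      linarith
    have hcosxs : |Real.cos (xs i)| = Real.cos δ := by
      rcases hxs i with h | h
      · rw [h, abs_of_pos hcos]
      · rw [h, Real.cos_pi_sub, abs_neg, abs_of_pos hcos]
    have hsinxs : Real.sin (xs i) = Real.sin δ := by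
      rcases hxs i with h | h
      · rw [h]
      · rw [h, Real.sin_pi_sub]
    have hcosu : ∀ u ∈ Set.uIcc (xs i) (x i), ε ≤ |Real.cos u| := by
      intro u hu
      have hub : |u - xs i| ≤ |x i - xs i| := by
        rcases Set.mem_uIcc.mp hu with ⟨ha, hb⟩ | ⟨ha, hb⟩
        · rw [abs_of_nonneg (by linarith)]
          calc u - xs i ≤ x i - xs i := by linarith
            _ ≤ |x i - xs i| := le_abs_self _
        · rw [abs_of_nonpos (by linarith)]
          have h4 : xs i - x i ≤ |xs i - x i| := le_abs_self _
          rw [abs_sub_comm] at h4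
          linarith
      have hlip : |Real.cos u - Real.cos (xs i)| ≤ |u - xs i| := abs_cos_sub_cos' _ _
      have h1 : |Real.cos (xs i)| - |Real.cos u| ≤ |Real.cos u - Real.cos (xs i)| := by
        rw [abs_sub_comm]
        exact abs_sub_abs_le_abs_sub _ _
      rw [hcosxs] at h1
      have : |u - xs i| < ε := lt_of_le_of_lt hub hdist
      rw [hε] at *
      linarith
    have hmvt := mvt_sin (xs i) (x i) ε (le_of_lt hεpos) hcosu
    rw [hsinxs] at hmvt
    have hvv : |Real.sin (x i) - Real.sin δ| = |v i| := by rw [hv]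
    rw [hvv] at hmvt
    have h0 : 0 ≤ ε * |x i - xs i| := by positivity
    have := mul_self_le_mul_self h0 hmvt
    calc ε ^ 2 * (x i - xs i) ^ 2 = (ε * |x i - xs i|) * (ε * |x i - xs i|) := by
          rw [mul_mul_mul_comm, abs_mul_abs_self]
          ring
      _ ≤ |v i| * |v i| := this
      _ = (v i) ^ 2 := by rw [abs_mul_abs_self]; ring
  have hST : ε ^ 2 * ∑ i : Fin N, (x i - xs i) ^ 2 ≤ S := by
    rw [hS, ← Fin.sum_univ_eq_sum_range (fun n => w n ^ 2) N]
    have : ∀ i : Fin N, (w (i : ℕ)) ^ 2 = (v i) ^ 2 := fun i => by rw [hw i]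
    rw [Finset.sum_congr rfl (fun i _ => this i), Finset.mul_sum]
    exact Finset.sum_le_sum (fun i _ => hSx i)
  -- norm bound
  have hnorm : ‖x - xs‖ ^ 2 ≤ ∑ i : Fin N, (x i - xs i) ^ 2 := by
    have hTnn : 0 ≤ ∑ i : Fin N, (x i - xs i) ^ 2 := Finset.sum_nonneg fun i _ => sq_nonneg _
    have h1 : ‖x - xs‖ ≤ Real.sqrt (∑ i : Fin N, (x i - xs i) ^ 2) := by
      apply pi_norm_le_iff_of_nonneg (Real.sqrt_nonneg _) |>.mpr
      intro i
      have h2 : (x i - xs i) ^ 2 ≤ ∑ j : Fin N, (x j - xs j) ^ 2 :=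
        Finset.single_le_sum (fun j _ => sq_nonneg (x j - xs j)) (Finset.mem_univ i)
      have h3 : ‖(x - xs) i‖ = |x i - xs i| := by simp [Real.norm_eq_abs]
      rw [h3, ← Real.sqrt_sq_eq_abs]
      exact Real.sqrt_le_sqrt h2
    calc ‖x - xs‖ ^ 2 ≤ Real.sqrt (∑ i : Fin N, (x i - xs i) ^ 2) ^ 2 := by
          apply pow_le_pow_left₀ (norm_nonneg _) h1
      _ = ∑ i : Fin N, (x i - xs i) ^ 2 := Real.sq_sqrt hTnn
  -- assemble
  have hfinal : -c₁ * S ≤ -(c₁ * ε ^ 2) * ‖x - xs‖ ^ 2 := by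
    have e1 : c₁ * (ε ^ 2 * ‖x - xs‖ ^ 2) ≤ c₁ * (ε ^ 2 * ∑ i : Fin N, (x i - xs i) ^ 2) := by
      apply mul_le_mul_of_nonneg_left _ (le_of_lt hc₁pos)
      apply mul_le_mul_of_nonneg_left hnorm (by positivity)
    have e2 : c₁ * (ε ^ 2 * ∑ i : Fin N, (x i - xs i) ^ 2) ≤ c₁ * S :=
      mul_le_mul_of_nonneg_left hST (le_of_lt hc₁pos)
    nlinarith [e1, e2]
  rw [hsum_eq]
  linarith [hqf, hfinal]
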